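/- arXiv:2308.05289 — 2 statements merged into one kernel-verified Lean document; each statement's English description precedes it below -/
import Mathlib

section
/- Complex-step derivative approximation: if f : ℂ → ℂ is complex differentiable at a real point x and maps reals to reals in a neighborhood of x, then Im[f(x + ih)]/h → f'(x) as h → 0 along real h ≠ 0. -/
theorem complex_step_derivative (f : ℂ → ℂ) (x : ℝ)
    (hf : DifferentiableAt ℂ f (x : ℂ))
    (hreal : ∀ᶠ t : ℝ in nhds x, (f (t : ℂ)).im = 0) :
    Filter.Tendsto (fun h : ℝ => (((f ((x : ℂ) + h * Complex.I)).im / h : ℝ) : ℂ))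
      (nhdsWithin 0 {0}ᶜ) (nhds (deriv f (x : ℂ))) := by
  set L := deriv f (x : ℂ) with hL
  have hD : HasDerivAt f L (x : ℂ) := hf.hasDerivAt
  have hx0 : (f (x : ℂ)).im = 0 := hreal.self_of_nhds
  -- the derivative is real
  have hreal' : HasDerivAt (fun t : ℝ => f (t : ℂ)) L x := hD.comp_ofReal
  have him : HasDerivAt (fun t : ℝ => (f (t : ℂ)).im) L.im x :=
    Complex.imCLM.hasFDerivAt.comp_hasDerivAt x hreal'
  have him0 : HasDerivAt (fun t : ℝ => (f (t : ℂ)).im) 0 x :=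
    (hasDerivAt_const x (0 : ℝ)).congr_of_eventuallyEq (by filter_upwards [hreal] with t ht using ht)
  have hLim : L.im = 0 := him.unique him0
  -- derivative along the imaginary direction
  have hc : HasDerivAt (fun h : ℝ => (x : ℂ) + h * Complex.I) Complex.I 0 := by
    have : HasDerivAt (fun h : ℝ => (h : ℂ)) 1 (0 : ℝ) := Complex.ofRealCLM.hasDerivAt
    simpa using (this.mul_const Complex.I).const_add (x : ℂ)
  have hcomp : HasDerivAt (fun h : ℝ => f ((x : ℂ) + h * Complex.I)) (Complex.I • L) 0 := by
    have := HasDerivAt.scomp (0 : ℝ) (by simpa using hD) hc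
    exact this
  have himφ : HasDerivAt (fun h : ℝ => (f ((x : ℂ) + h * Complex.I)).im) L.re 0 := by
    have := Complex.imCLM.hasFDerivAt.comp_hasDerivAt (0 : ℝ) hcomp
    have h2 : Complex.imCLM (Complex.I • L) = L.re := by simp [Complex.smul_re, Complex.smul_im, hLim]
    rw [h2] at this
    exact this
  have hslope := hasDerivAt_iff_tendsto_slope.mp himφ
  have heq : (L.re : ℂ) = L := by
    apply Complex.ext <;> simp [hLim]
  rw [← heq]
  refine (Complex.continuous_ofReal.continuousAt.tendsto.comp ?_)
  refine hslope.congr ?_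
  intro h
  simp [slope, hx0, div_eq_inv_mul]
end

section
/- Second-order accuracy of the complex step: if f is holomorphic near a real point x and real-valued on the reals near x, then Im[f(x+ih)]/h = f'(x) + O(h²) as real h → 0; specifically |Im[f(x+ih)]/h − f'(x)| ≤ C h² for some constant C depending on a bound for f''' near x. -/
open Metric Set

private lemma line_hasDerivAt (g : ℂ → ℂ) (g' z₀ c : ℂ) (t : ℝ)
    (hg : HasDerivAt g g' (z₀ + t * c)) :
    HasDerivAt (fun s : ℝ => g (z₀ + s * c)) (c * g') t := by
  have hl : HasDerivAt (fun s : ℝ => z₀ + (s : ℂ) * c) c t := by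
    simpa using ((Complex.ofRealCLM.hasDerivAt (x := t)).mul_const c).const_add z₀
  have := (hg.hasFDerivAt.restrictScalars ℝ).comp_hasDerivAt t hl
  simpa [mul_comm, Function.comp_def] using this

theorem complex_step_second_order (f : ℂ → ℂ) (x : ℝ) (r M : ℝ) (hr : 0 < r)
    (hf : DifferentiableOn ℂ f (Metric.ball (x : ℂ) r))
    (hreal : ∀ t : ℝ, (t : ℂ) ∈ Metric.ball (x : ℂ) r → (f (t : ℂ)).im = 0)
    (hM : ∀ z ∈ Metric.ball (x : ℂ) r, ‖iteratedDeriv 3 f z‖ ≤ M) :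
    ∃ C : ℝ, ∀ h : ℝ, h ≠ 0 → ((x : ℂ) + h * Complex.I) ∈ Metric.ball (x : ℂ) r →
      |(f ((x : ℂ) + h * Complex.I)).im / h - (deriv f (x : ℂ)).re| ≤ C * h ^ 2 := by
  set B := Metric.ball (x : ℂ) r with hB
  have hOpen : IsOpen B := isOpen_ball
  have hAn : AnalyticOnNhd ℂ f B := hf.analyticOnNhd hOpen
  have hiter : ∀ k : ℕ, AnalyticOnNhd ℂ (iteratedDeriv k f) B := by
    intro k
    induction k with
    | zero => simpa [iteratedDeriv_zero] using hAn
    | succ k ih => rw [iteratedDeriv_succ]; exact ih.deriv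
  -- derivative of iterated derivatives
  have hd : ∀ (k : ℕ) (z : ℂ), z ∈ B →
      HasDerivAt (iteratedDeriv k f) (iteratedDeriv (k + 1) f z) z := by
    intro k z hz
    have := ((hiter k) z hz).differentiableAt.hasDerivAt
    rwa [show deriv (iteratedDeriv k f) z = iteratedDeriv (k + 1) f z by
      rw [iteratedDeriv_succ]] at this
  -- imaginary parts of iterated derivatives vanish on the real segment
  have him : ∀ (k : ℕ) (t : ℝ), (t : ℂ) ∈ B → (iteratedDeriv k f t).im = 0 := by
    intro k
    induction k with
    | zero => simpa [iteratedDeriv_zero] using hreal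
    | succ k ih =>
      intro t ht
      have h1 : HasDerivAt (iteratedDeriv k f) (iteratedDeriv (k + 1) f t)
          ((0 : ℂ) + (t : ℂ) * 1) := by simpa using hd k t ht
      have h2 := line_hasDerivAt _ _ 0 1 t h1
      have h3 : HasDerivAt (fun s : ℝ => iteratedDeriv k f s)
          (iteratedDeriv (k + 1) f t) t := by
        simpa using h2
      have h4 : HasDerivAt (fun s : ℝ => (iteratedDeriv k f s).im)
          (iteratedDeriv (k + 1) f t).im t := by
        simpa [Function.comp_def] using (Complex.imCLM.hasFDerivAt.comp_hasDerivAt t h3)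
      have hS : IsOpen {s : ℝ | (s : ℂ) ∈ B} :=
        hOpen.preimage Complex.continuous_ofReal
      have hev : (fun s : ℝ => (iteratedDeriv k f s).im) =ᶠ[nhds t] fun _ => (0 : ℝ) :=
        Filter.eventuallyEq_of_mem (hS.mem_nhds ht) fun s hs => ih s hs
      have h5 : HasDerivAt (fun s : ℝ => (iteratedDeriv k f s).im) 0 t :=
        (hasDerivAt_const t (0 : ℝ)).congr_of_eventuallyEq hev
      exact h4.unique h5
  have hxB : (x : ℂ) ∈ B := mem_ball_self hr
  refine ⟨M / 2, ?_⟩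
  intro h hh hball
  have habsh : |h| < r := by
    have := mem_ball_iff_norm.mp hball
    simpa [Complex.norm_real] using this
  -- maps to
  have hmaps : ∀ t ∈ Icc (0 : ℝ) 1, (x : ℂ) + (t : ℂ) * ((h : ℂ) * Complex.I) ∈ B := by
    intro t ht
    rw [hB, mem_ball_iff_norm]
    have : ‖(x : ℂ) + (t : ℂ) * ((h : ℂ) * Complex.I) - (x : ℂ)‖ = |t| * |h| := by
      simp [Complex.norm_real]
    rw [this]
    calc |t| * |h| ≤ 1 * |h| := by
          apply mul_le_mul_of_nonneg_right _ (abs_nonneg h)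
          rw [abs_of_nonneg ht.1]; exact ht.2
      _ < r := by rw [one_mul]; exact habsh
  set φ : ℝ → ℂ := fun t => f ((x : ℂ) + (t : ℂ) * ((h : ℂ) * Complex.I)) with hφ
  have hu : UniqueDiffOn ℝ (Icc (0 : ℝ) 1) := uniqueDiffOn_Icc one_pos
  -- smoothness
  have hlC : ContDiff ℝ 3 (fun t : ℝ => (x : ℂ) + (t : ℂ) * ((h : ℂ) * Complex.I)) := by
    have h1 : ContDiff ℝ 3 (fun t : ℝ => (t : ℂ)) := Complex.ofRealCLM.contDiff
    exact contDiff_const.add (h1.mul contDiff_const)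
  have hφc : ContDiffOn ℝ 3 φ (Icc (0 : ℝ) 1) := by
    have hfc : ContDiffOn ℂ 3 f B := hf.contDiffOn hOpen
    exact (hfc.restrict_scalars ℝ).comp hlC.contDiffOn fun t ht => hmaps t ht
  -- iterated derivatives of φ
  have key : ∀ (k : ℕ), ∀ t ∈ Icc (0 : ℝ) 1,
      iteratedDerivWithin k φ (Icc (0 : ℝ) 1) t =
        ((h : ℂ) * Complex.I) ^ k *
          iteratedDeriv k f ((x : ℂ) + (t : ℂ) * ((h : ℂ) * Complex.I)) := by
    intro k
    induction k with
    | zero => intro t ht; simp [hφ]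
    | succ k ih =>
      intro t ht
      rw [iteratedDerivWithin_succ]
      have hψ : HasDerivAt (fun s : ℝ => ((h : ℂ) * Complex.I) ^ k *
          iteratedDeriv k f ((x : ℂ) + (s : ℂ) * ((h : ℂ) * Complex.I)))
          (((h : ℂ) * Complex.I) ^ k * (((h : ℂ) * Complex.I) *
            iteratedDeriv (k + 1) f ((x : ℂ) + (t : ℂ) * ((h : ℂ) * Complex.I)))) t :=
        (line_hasDerivAt _ _ _ _ t (hd k _ (hmaps t ht))).const_mul _
      have hcongr : derivWithin (iteratedDerivWithin k φ (Icc (0 : ℝ) 1)) (Icc (0 : ℝ) 1) t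
          = derivWithin (fun s : ℝ => ((h : ℂ) * Complex.I) ^ k *
              iteratedDeriv k f ((x : ℂ) + (s : ℂ) * ((h : ℂ) * Complex.I))) (Icc (0 : ℝ) 1) t :=
        derivWithin_congr (fun s hs => ih s hs) (ih t ht)
      rw [hcongr, (hψ.hasDerivWithinAt).derivWithin (hu t ht)]
      ring
  -- bound for third derivative of φ
  have hbound : ∀ y ∈ Icc (0 : ℝ) 1,
      ‖iteratedDerivWithin 3 φ (Icc (0 : ℝ) 1) y‖ ≤ |h| ^ 3 * M := by
    intro y hy
    rw [key 3 y hy, norm_mul, norm_pow]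
    have h1 : ‖(h : ℂ) * Complex.I‖ = |h| := by simp [Complex.norm_real]
    rw [h1]
    exact mul_le_mul_of_nonneg_left (hM _ (hmaps y hy)) (by positivity)
  -- Taylor's theorem
  have htay := taylor_mean_remainder_bound (f := φ) (a := 0) (b := 1) (x := 1) (n := 2)
      zero_le_one (by exact_mod_cast hφc) (by norm_num) hbound
  -- compute the Taylor polynomial
  have h0 : (0 : ℝ) ∈ Icc (0 : ℝ) 1 := by norm_num
  have k1 := key 1 0 h0
  have k2 := key 2 0 h0
  simp only [Complex.ofReal_zero, zero_mul, add_zero] at k1 k2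
  have hsq : ((h : ℂ) * Complex.I) ^ 2 = -((h ^ 2 : ℝ) : ℂ) := by
    rw [mul_pow, Complex.I_sq]; push_cast; ring
  have hT : taylorWithinEval φ 2 (Icc (0 : ℝ) 1) 0 1 =
      f (x : ℂ) + ((h : ℂ) * Complex.I) * iteratedDeriv 1 f (x : ℂ)
        - ((h ^ 2 / 2 : ℝ) : ℂ) * iteratedDeriv 2 f (x : ℂ) := by
    rw [show (2 : ℕ) = 1 + 1 from rfl, taylorWithinEval_succ, taylorWithinEval_succ,
      taylor_within_zero_eval, k1, k2]
    simp only [hφ, Complex.ofReal_zero, zero_mul, add_zero, Nat.factorial]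
    rw [hsq]
    push_cast
    simp only [Complex.real_smul]
    push_cast
    ring
  have hφ1 : φ 1 = f ((x : ℂ) + (h : ℂ) * Complex.I) := by simp [hφ]
  rw [hφ1, hT] at htay
  -- bound imaginary part
  have him0 : (f (x : ℂ)).im = 0 := by
    have := him 0 x hxB; simpa [iteratedDeriv_zero] using this
  have him2 : (iteratedDeriv 2 f (x : ℂ)).im = 0 := him 2 x hxB
  have hderiv1 : deriv f (x : ℂ) = iteratedDeriv 1 f (x : ℂ) := by
    rw [iteratedDeriv_one]
  set D1 := iteratedDeriv 1 f (x : ℂ) with hD1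
  have hwim : (f (x : ℂ) + ((h : ℂ) * Complex.I) * D1
      - ((h ^ 2 / 2 : ℝ) : ℂ) * iteratedDeriv 2 f (x : ℂ)).im = h * D1.re := by
    simp [Complex.add_im, Complex.sub_im, Complex.mul_im, Complex.mul_re,
      Complex.ofReal_re, Complex.ofReal_im, Complex.I_re, Complex.I_im, ← Complex.ofReal_pow, him0, him2]
  have hnorm : |(f ((x : ℂ) + (h : ℂ) * Complex.I)).im - h * D1.re| ≤ M / 2 * |h| ^ 3 := by
    have h1 : |(f ((x : ℂ) + (h : ℂ) * Complex.I) - (f (x : ℂ) + ((h : ℂ) * Complex.I) * D1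
        - ((h ^ 2 / 2 : ℝ) : ℂ) * iteratedDeriv 2 f (x : ℂ))).im|
        ≤ ‖f ((x : ℂ) + (h : ℂ) * Complex.I) - (f (x : ℂ) + ((h : ℂ) * Complex.I) * D1
        - ((h ^ 2 / 2 : ℝ) : ℂ) * iteratedDeriv 2 f (x : ℂ))‖ := by
      exact Complex.abs_im_le_norm _
    rw [Complex.sub_im, hwim] at h1
    refine h1.trans (htay.trans (le_of_eq ?_))
    simp [Nat.factorial]
    ring
  have heq : |(f ((x : ℂ) + (h : ℂ) * Complex.I)).im / h - (deriv f (x : ℂ)).re|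
      = |(f ((x : ℂ) + (h : ℂ) * Complex.I)).im - h * D1.re| / |h| := by
    rw [hderiv1, ← abs_div]
    congr 1
    field_simp
  rw [heq, div_le_iff₀ (abs_pos.mpr hh)]
  have h3 : M / 2 * |h| ^ 3 = M / 2 * h ^ 2 * |h| := by
    rw [pow_succ, sq_abs]; ring
  exact hnorm.trans (le_of_eq h3)
end
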